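/- Let A, B, X be bounded linear operators on a complex Hilbert space H, let m > 0 be a real number, and suppose X − mI is a positive operator. Then m‖A − B‖ ≤ w(S) ≤ (‖AX − XB‖ + ‖A*X − XB*‖)/2, where S is the operator on H ⊕ H given by the 2×2 operator matrix with zero diagonal entries, (1,2)-entry AX − XB, and (2,1)-entry A*X − XB*, and w denotes the numerical radius. -/

import Mathlib

/-- The numerical radius of a bounded linear operator. -/
noncomputable def numRadius {E : Type*} [NormedAddCommGroup E] [InnerProductSpace ℂ E]
    (T : E →L[ℂ] E) : ℝ :=
  ⨆ x : {x : E // ‖x‖ = 1}, ‖(inner ℂ (T x.val) x.val : ℂ)‖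

/-- The 2×2 operator matrix `[[0, C],[D, 0]]` acting on `H ⊕ H` (as `WithLp 2 (H × H)`)
by `(x, y) ↦ (C y, D x)`. -/
noncomputable def offDiagOp {H : Type*} [NormedAddCommGroup H] [InnerProductSpace ℂ H]
    (C D : H →L[ℂ] H) : WithLp 2 (H × H) →L[ℂ] WithLp 2 (H × H) :=
  ((WithLp.prodContinuousLinearEquiv 2 ℂ H H).symm : (H × H) →L[ℂ] WithLp 2 (H × H)) ∘L
    ((C ∘L ContinuousLinearMap.snd ℂ H H).prod (D ∘L ContinuousLinearMap.fst ℂ H H)) ∘L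
    ((WithLp.prodContinuousLinearEquiv 2 ℂ H H) : WithLp 2 (H × H) →L[ℂ] (H × H))

open ContinuousLinearMap RCLike

set_option maxHeartbeats 1000000

section Aux

variable {H : Type*} [NormedAddCommGroup H] [InnerProductSpace ℂ H]

lemma inner_self_complex (w : H) : (inner ℂ w w : ℂ) = ((‖w‖ ^ 2 : ℝ) : ℂ) := by
  rw [inner_self_eq_norm_sq_to_K (𝕜 := ℂ)]
  simp [RCLike.ofReal_alg]

lemma re_ofReal_mul' (r : ℝ) (z : ℂ) : re (((r : ℝ) : ℂ) * z) = r * re z := by simp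

lemma offDiagOp_apply (C D : H →L[ℂ] H) (z : WithLp 2 (H × H)) :
    offDiagOp C D z = (WithLp.equiv 2 (H × H)).symm (C z.snd, D z.fst) := rfl

lemma inner_offDiagOp (C D : H →L[ℂ] H) (z : WithLp 2 (H × H)) :
    (inner ℂ (offDiagOp C D z) z : ℂ)
      = inner ℂ (C z.snd) z.fst + inner ℂ (D z.fst) z.snd := rfl

lemma inner_offDiag_le (C D : H →L[ℂ] H) (z : WithLp 2 (H × H)) (hz : ‖z‖ = 1) :
    ‖(inner ℂ (offDiagOp C D z) z : ℂ)‖ ≤ (‖C‖ + ‖D‖) / 2 := by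
  rw [inner_offDiagOp]
  have f0 := norm_add_le (inner ℂ (C z.snd) z.fst : ℂ) (inner ℂ (D z.fst) z.snd : ℂ)
  have f1 : ‖(inner ℂ (C z.snd) z.fst : ℂ)‖ ≤ ‖C z.snd‖ * ‖z.fst‖ := norm_inner_le_norm _ _
  have f2 : ‖C z.snd‖ ≤ ‖C‖ * ‖z.snd‖ := C.le_opNorm _
  have f3 : ‖(inner ℂ (D z.fst) z.snd : ℂ)‖ ≤ ‖D z.fst‖ * ‖z.snd‖ := norm_inner_le_norm _ _
  have f4 : ‖D z.fst‖ ≤ ‖D‖ * ‖z.fst‖ := D.le_opNorm _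
  have f5 : ‖z.fst‖ ^ 2 + ‖z.snd‖ ^ 2 = 1 := by
    rw [← WithLp.prod_norm_sq_eq_of_L2, hz]; norm_num
  nlinarith [norm_nonneg z.fst, norm_nonneg z.snd, opNorm_nonneg C, opNorm_nonneg D,
    sq_nonneg (‖z.fst‖ - ‖z.snd‖), norm_nonneg (C z.snd), norm_nonneg (D z.fst)]

lemma numRadius_nonneg (S : WithLp 2 (H × H) →L[ℂ] WithLp 2 (H × H)) :
    0 ≤ numRadius S :=
  Real.iSup_nonneg fun _ => norm_nonneg _

lemma numRadius_offDiag_le (C D : H →L[ℂ] H) :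
    numRadius (offDiagOp C D) ≤ (‖C‖ + ‖D‖) / 2 := by
  apply Real.iSup_le
  · rintro ⟨z, hz⟩
    exact inner_offDiag_le C D z hz
  · positivity

lemma bdd_offDiag (C D : H →L[ℂ] H) :
    BddAbove (Set.range fun z : {z : WithLp 2 (H × H) // ‖z‖ = 1} =>
      ‖(inner ℂ (offDiagOp C D z.val) z.val : ℂ)‖) := by
  refine ⟨(‖C‖ + ‖D‖) / 2, ?_⟩
  rintro _ ⟨z, rfl⟩
  exact inner_offDiag_le C D z.1 z.2

lemma exists_unit_combo (a b : ℂ) :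
    ∃ l : ℂ, ‖l‖ = 1 ∧ ‖(starRingEnd ℂ) l * a + l * b‖ = ‖a‖ + ‖b‖ := by
  set α : ℂ := if a = 0 then 1 else (‖a‖⁻¹ : ℝ) * a with hαdef
  set β : ℂ := if b = 0 then 1 else (‖b‖⁻¹ : ℝ) * b with hβdef
  have hαn : ‖α‖ = 1 := by
    rcases eq_or_ne a 0 with h | h
    · simp [hαdef, h]
    · have : ‖a‖ ≠ 0 := norm_ne_zero_iff.2 h
      simp [hαdef, h, norm_mul, abs_of_nonneg (norm_nonneg a), inv_mul_cancel₀ this]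
  have hβn : ‖β‖ = 1 := by
    rcases eq_or_ne b 0 with h | h
    · simp [hβdef, h]
    · have : ‖b‖ ≠ 0 := norm_ne_zero_iff.2 h
      simp [hβdef, h, norm_mul, abs_of_nonneg (norm_nonneg b), inv_mul_cancel₀ this]
  have ha : a = (‖a‖ : ℝ) * α := by
    rcases eq_or_ne a 0 with h | h
    · simp [hαdef, h]
    · have h0 : (‖a‖ : ℂ) ≠ 0 := by
        simpa using norm_ne_zero_iff.2 h
      rw [hαdef, if_neg h, ← mul_assoc, ← Complex.ofReal_mul, mul_inv_cancel₀ (norm_ne_zero_iff.2 h)]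
      simp
  have hb : b = (‖b‖ : ℝ) * β := by
    rcases eq_or_ne b 0 with h | h
    · simp [hβdef, h]
    · have h0 : (‖b‖ : ℂ) ≠ 0 := by
        simpa using norm_ne_zero_iff.2 h
      rw [hβdef, if_neg h, ← mul_assoc, ← Complex.ofReal_mul, mul_inv_cancel₀ (norm_ne_zero_iff.2 h)]
      simp
  obtain ⟨l, hl⟩ := IsAlgClosed.exists_pow_nat_eq (k := ℂ) (α * (starRingEnd ℂ) β) two_pos
  have hln : ‖l‖ = 1 := by
    have h1 : ‖l‖ ^ 2 = 1 := by
      rw [← norm_pow, hl, norm_mul, hαn, RCLike.norm_conj, hβn]; norm_num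
    nlinarith [norm_nonneg l]
  refine ⟨l, hln, ?_⟩
  have hcl : (starRingEnd ℂ) l * l = 1 := by
    have := RCLike.conj_mul (K := ℂ) l
    rw [this, hln]; norm_num
  have hcβ : (starRingEnd ℂ) β * β = 1 := by
    have := RCLike.conj_mul (K := ℂ) β
    rw [this, hβn]; norm_num
  have key : (starRingEnd ℂ) l * a + l * b = (starRingEnd ℂ) l * (α * ((‖a‖ : ℝ) + (‖b‖ : ℝ))) := by
    calc (starRingEnd ℂ) l * a + l * b
        = (starRingEnd ℂ) l * a + ((starRingEnd ℂ) l * l) * (l * b) := by rw [hcl]; ring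
      _ = (starRingEnd ℂ) l * (a + l ^ 2 * b) := by ring
      _ = (starRingEnd ℂ) l * (((‖a‖ : ℝ) : ℂ) * α + (α * (starRingEnd ℂ) β) * (((‖b‖ : ℝ) : ℂ) * β)) := by
          rw [hl, ← ha, ← hb]
      _ = (starRingEnd ℂ) l * (((‖a‖ : ℝ) : ℂ) * α + α * ((‖b‖ : ℝ) : ℂ) * ((starRingEnd ℂ) β * β)) := by
          ring
      _ = (starRingEnd ℂ) l * (α * ((‖a‖ : ℝ) + (‖b‖ : ℝ))) := by rw [hcβ]; ring
  rw [key, norm_mul, RCLike.norm_conj, hln, one_mul, norm_mul, hαn, one_mul]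
  rw [show (((‖a‖ : ℝ) : ℂ) + ((‖b‖ : ℝ) : ℂ)) = (((‖a‖ + ‖b‖ : ℝ)) : ℂ) by push_cast; ring]
  rw [Complex.norm_real, Real.norm_eq_abs,
    abs_of_nonneg (add_nonneg (norm_nonneg a) (norm_nonneg b))]

end Aux

section Lower

variable {H : Type*} [NormedAddCommGroup H] [InnerProductSpace ℂ H] [CompleteSpace H]

lemma lower_pt (C D : H →L[ℂ] H) {x y : H} (hx : ‖x‖ = 1) (hy : ‖y‖ = 1) :
    ‖(inner ℂ ((C + ContinuousLinearMap.adjoint D) y) x : ℂ)‖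
      ≤ 2 * numRadius (offDiagOp C D) := by
  set a : ℂ := inner ℂ (C y) x with hadef
  set b : ℂ := inner ℂ (D x) y with hbdef
  obtain ⟨l, hl, hcombo⟩ := exists_unit_combo a b
  set c : ℝ := (Real.sqrt 2)⁻¹ with hcdef
  have hc2 : c ^ 2 = 2⁻¹ := by
    rw [hcdef, inv_pow, Real.sq_sqrt (by norm_num : (0:ℝ) ≤ 2)]
  have hcpos : 0 < c := by positivity
  set z : WithLp 2 (H × H) :=
    (WithLp.equiv 2 (H × H)).symm ((c : ℂ) • x, ((c : ℂ) * l) • y) with hzdef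
  have hzfst : z.fst = (c : ℂ) • x := rfl
  have hzsnd : z.snd = ((c : ℂ) * l) • y := rfl
  have hz : ‖z‖ = 1 := by
    have h2 : ‖z‖ ^ 2 = 1 := by
      rw [WithLp.prod_norm_sq_eq_of_L2, hzfst, hzsnd]
      rw [norm_smul, norm_smul, hx, hy, norm_mul, hl]
      simp only [Complex.norm_real, mul_one, Real.norm_eq_abs, sq_abs]
      nlinarith [hc2]
    nlinarith [norm_nonneg z]
  have hSz : (inner ℂ (offDiagOp C D z) z : ℂ)
      = ((c : ℝ) : ℂ) ^ 2 * ((starRingEnd ℂ) l * a + l * b) := by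
    rw [inner_offDiagOp, hzfst, hzsnd, map_smul, map_smul]
    rw [inner_smul_left, inner_smul_left, inner_smul_right, inner_smul_right]
    rw [← hadef, ← hbdef]
    simp only [map_mul, Complex.conj_ofReal]
    ring
  have hSznorm : ‖(inner ℂ (offDiagOp C D z) z : ℂ)‖ = (‖a‖ + ‖b‖) / 2 := by
    rw [hSz, norm_mul, hcombo, norm_pow]
    simp only [Complex.norm_real, Real.norm_eq_abs, sq_abs]
    rw [hc2]
    ring
  have hle : ‖(inner ℂ (offDiagOp C D z) z : ℂ)‖ ≤ numRadius (offDiagOp C D) :=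
    le_ciSup (bdd_offDiag C D) (⟨z, hz⟩ : {z : WithLp 2 (H × H) // ‖z‖ = 1})
  have hsplit : (inner ℂ ((C + ContinuousLinearMap.adjoint D) y) x : ℂ)
      = a + (starRingEnd ℂ) b := by
    rw [ContinuousLinearMap.add_apply, inner_add_left, ← hadef,
      ContinuousLinearMap.adjoint_inner_left, hbdef, inner_conj_symm]
  calc ‖(inner ℂ ((C + ContinuousLinearMap.adjoint D) y) x : ℂ)‖
      = ‖a + (starRingEnd ℂ) b‖ := by rw [hsplit]
    _ ≤ ‖a‖ + ‖b‖ := by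
        calc ‖a + (starRingEnd ℂ) b‖ ≤ ‖a‖ + ‖(starRingEnd ℂ) b‖ := norm_add_le _ _
          _ = ‖a‖ + ‖b‖ := by rw [RCLike.norm_conj]
    _ = 2 * ((‖a‖ + ‖b‖) / 2) := by ring
    _ ≤ 2 * numRadius (offDiagOp C D) := by
        rw [← hSznorm]; linarith [hle, hSznorm ▸ hle]

lemma opNorm_le_double (C D : H →L[ℂ] H) :
    ‖C + ContinuousLinearMap.adjoint D‖ ≤ 2 * numRadius (offDiagOp C D) := by
  have hnr : 0 ≤ numRadius (offDiagOp C D) := numRadius_nonneg _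
  refine ContinuousLinearMap.opNorm_le_bound _ (by linarith) fun w => ?_
  rcases eq_or_ne w 0 with rfl | hw
  · simp
  · have hwn : ‖w‖ ≠ 0 := norm_ne_zero_iff.2 hw
    set y : H := ‖w‖⁻¹ • w with hydef
    have hy : ‖y‖ = 1 := norm_smul_inv_norm hw
    have hrecover : (C + ContinuousLinearMap.adjoint D) w
        = ‖w‖ • (C + ContinuousLinearMap.adjoint D) y := by
      rw [hydef, map_smul_of_tower, smul_smul, mul_inv_cancel₀ hwn, one_smul]
    rw [hrecover, norm_smul, Real.norm_eq_abs, abs_of_nonneg (norm_nonneg w), mul_comm]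
    refine mul_le_mul_of_nonneg_right ?_ (norm_nonneg w)
    set v : H := (C + ContinuousLinearMap.adjoint D) y with hvdef
    rcases eq_or_ne v 0 with hv | hv
    · rw [hv]; simpa using by linarith
    · have hvn : ‖v‖ ≠ 0 := norm_ne_zero_iff.2 hv
      set x : H := ‖v‖⁻¹ • v with hxdef
      have hx : ‖x‖ = 1 := norm_smul_inv_norm hv
      have h1 := lower_pt C D hx hy
      have h2 : (inner ℂ ((C + ContinuousLinearMap.adjoint D) y) x : ℂ)
          = ((‖v‖⁻¹ : ℝ) : ℂ) * inner ℂ v v := by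
        rw [← hvdef, hxdef, RCLike.real_smul_eq_coe_smul (K := ℂ), inner_smul_right]
        simp [RCLike.ofReal_alg]
      have h3 : ‖(inner ℂ ((C + ContinuousLinearMap.adjoint D) y) x : ℂ)‖ = ‖v‖ := by
        rw [h2, norm_mul, inner_self_complex]
        simp only [Complex.norm_real, Real.norm_eq_abs,
          abs_of_nonneg (inv_nonneg.2 (norm_nonneg v)), abs_of_nonneg (sq_nonneg ‖v‖)]
        rw [pow_two, ← mul_assoc, inv_mul_cancel₀ hvn, one_mul]
      rw [h3] at h1
      exact h1

lemma anti_lower (T X : H →L[ℂ] H) (m : ℝ) (hm : 0 < m)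
    (hX : (X - (m : ℂ) • (1 : H →L[ℂ] H)).IsPositive) :
    2 * m * ‖T‖ ≤ ‖T * X + X * T‖ := by
  have hXv : ∀ w : H, m * ‖w‖ ^ 2 ≤ re (inner ℂ (X w) w : ℂ) := by
    intro w
    have h0 := hX.2 w
    rw [ContinuousLinearMap.reApplyInnerSelf_apply] at h0
    have he2 : (inner ℂ ((X - (m : ℂ) • (1 : H →L[ℂ] H)) w) w : ℂ)
        = inner ℂ (X w) w - (m : ℂ) * ((‖w‖ ^ 2 : ℝ) : ℂ) := by
      rw [ContinuousLinearMap.sub_apply, ContinuousLinearMap.smul_apply,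
        ContinuousLinearMap.one_apply, inner_sub_left, inner_smul_left,
        inner_self_complex, Complex.conj_ofReal]
    rw [he2, map_sub, re_ofReal_mul'] at h0
    have h4 : re (((‖w‖ ^ 2 : ℝ) : ℂ)) = ‖w‖ ^ 2 := by
      simp only [RCLike.re_to_complex, Complex.ofReal_re]
    rw [h4] at h0
    linarith
  rcases eq_or_lt_of_le (norm_nonneg T) with hT | hT
  · rw [← hT]
    simp only [mul_zero]
    exact norm_nonneg _
  · set N := ‖T * X + X * T‖ with hNdef
    have key : ∀ c : ℝ, 0 ≤ c → c < ‖T‖ →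
        2 * m * c ^ 2 - ‖X‖ * ‖T‖ * Real.sqrt (‖T‖ ^ 2 - c ^ 2) ≤ N * ‖T‖ := by
      intro c hc0 hc
      obtain ⟨x, hx1, hxc⟩ := T.exists_lt_apply_of_lt_opNorm hc
      have hx0 : x ≠ 0 := by
        rintro rfl
        simp only [map_zero, norm_zero] at hxc
        linarith
      have hxn : ‖x‖ ≠ 0 := norm_ne_zero_iff.2 hx0
      set u : H := ‖x‖⁻¹ • x with hudef
      have hu1 : ‖u‖ = 1 := norm_smul_inv_norm hx0
      set v : H := T u with hvdef
      have hvnorm : ‖v‖ = ‖x‖⁻¹ * ‖T x‖ := by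
        rw [hvdef, hudef, map_smul_of_tower, norm_smul, Real.norm_eq_abs,
          abs_of_nonneg (inv_nonneg.2 (norm_nonneg x))]
      have hxpos : 0 < ‖x‖ := norm_pos_iff.2 hx0
      have hxinv : 1 ≤ ‖x‖⁻¹ := by
        have hmc := mul_inv_cancel₀ (ne_of_gt hxpos)
        have := mul_le_mul_of_nonneg_right hx1.le (le_of_lt (inv_pos.2 hxpos))
        linarith
      have hvc : c < ‖v‖ := by
        rw [hvnorm]
        nlinarith [norm_nonneg (T x)]
      have hvT : ‖v‖ ≤ ‖T‖ := by
        have := T.le_opNorm u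
        rwa [hu1, mul_one] at this
      set Ta := ContinuousLinearMap.adjoint T with hTa
      set r : H := Ta v - ((‖v‖ ^ 2 : ℝ) : ℂ) • u with hrdef
      have hrTv : Ta v = ((‖v‖ ^ 2 : ℝ) : ℂ) • u + r := by rw [hrdef]; abel
      have hre : re (inner ℂ (Ta v) u : ℂ) = ‖v‖ ^ 2 := by
        rw [hTa, ContinuousLinearMap.adjoint_inner_left, ← hvdef]
        exact inner_self_eq_norm_sq v
      have hTan : ‖Ta v‖ ≤ ‖T‖ * ‖v‖ := by
        have h1 := Ta.le_opNorm v
        have h2 : ‖Ta‖ = ‖T‖ := by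
          rw [hTa]; exact ContinuousLinearMap.adjoint.norm_map T
        rwa [h2] at h1
      have hsmn : ‖((‖v‖ ^ 2 : ℝ) : ℂ) • u‖ = ‖v‖ ^ 2 := by
        rw [norm_smul, hu1, mul_one, Complex.norm_real, Real.norm_eq_abs, abs_of_nonneg (sq_nonneg ‖v‖)]
      have hrsq : ‖r‖ ^ 2 ≤ ‖T‖ ^ 2 * (‖T‖ ^ 2 - c ^ 2) := by
        have hns := norm_sub_sq (𝕜 := ℂ) (Ta v) (((‖v‖ ^ 2 : ℝ) : ℂ) • u)
        have hinsm : re (inner ℂ (Ta v) (((‖v‖ ^ 2 : ℝ) : ℂ) • u) : ℂ) = ‖v‖ ^ 2 * ‖v‖ ^ 2 := by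
          rw [inner_smul_right, re_ofReal_mul', hre]
        rw [← hrdef] at hns
        have hv2T : ‖v‖ ^ 2 ≤ ‖T‖ ^ 2 := by nlinarith [norm_nonneg v]
        have hc2v : c ^ 2 ≤ ‖v‖ ^ 2 := by nlinarith
        have hTa2 : ‖Ta v‖ ^ 2 ≤ ‖T‖ ^ 2 * ‖v‖ ^ 2 := by
          nlinarith [norm_nonneg (Ta v), norm_nonneg v, ContinuousLinearMap.opNorm_nonneg T]
        have hprod : ‖v‖ ^ 2 * (‖T‖ ^ 2 - ‖v‖ ^ 2) ≤ ‖T‖ ^ 2 * (‖T‖ ^ 2 - c ^ 2) :=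
          mul_le_mul hv2T (by linarith) (by linarith) (by positivity)
        rw [hns, hinsm, hsmn]
        nlinarith [hTa2, hprod]
      have hrle : ‖r‖ ≤ ‖T‖ * Real.sqrt (‖T‖ ^ 2 - c ^ 2) := by
        have h1 : ‖r‖ = Real.sqrt (‖r‖ ^ 2) := (Real.sqrt_sq (norm_nonneg r)).symm
        rw [h1]
        calc Real.sqrt (‖r‖ ^ 2) ≤ Real.sqrt (‖T‖ ^ 2 * (‖T‖ ^ 2 - c ^ 2)) :=
              Real.sqrt_le_sqrt hrsq
          _ = ‖T‖ * Real.sqrt (‖T‖ ^ 2 - c ^ 2) := by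
              rw [Real.sqrt_mul (by positivity), Real.sqrt_sq (norm_nonneg T)]
      -- main estimate
      have e1 : (inner ℂ ((T * X + X * T) u) v : ℂ)
          = inner ℂ (T (X u)) v + inner ℂ (X v) v := by
        rw [ContinuousLinearMap.add_apply, inner_add_left]
        simp [hvdef]
      have e2 : (inner ℂ (T (X u)) v : ℂ) = inner ℂ (X u) (Ta v) := by
        rw [hTa, ContinuousLinearMap.adjoint_inner_right]
      have e3 : (inner ℂ (X u) (Ta v) : ℂ)
          = ((‖v‖ ^ 2 : ℝ) : ℂ) * inner ℂ (X u) u + inner ℂ (X u) r := by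
        rw [hrTv, inner_add_right, inner_smul_right]
      have hr1 : m ≤ re (inner ℂ (X u) u : ℂ) := by
        have := hXv u
        rwa [hu1, one_pow, mul_one] at this
      have hr2 : -(‖X‖ * ‖r‖) ≤ re (inner ℂ (X u) r : ℂ) := by
        have h1 : |re (inner ℂ (X u) r : ℂ)| ≤ ‖(inner ℂ (X u) r : ℂ)‖ := RCLike.abs_re_le_norm _
        have h2 : ‖(inner ℂ (X u) r : ℂ)‖ ≤ ‖X u‖ * ‖r‖ := norm_inner_le_norm _ _
        have h3 : ‖X u‖ ≤ ‖X‖ := by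
          have := X.le_opNorm u; rwa [hu1, mul_one] at this
        have h4 : ‖X u‖ * ‖r‖ ≤ ‖X‖ * ‖r‖ :=
          mul_le_mul_of_nonneg_right h3 (norm_nonneg r)
        have := neg_abs_le (re (inner ℂ (X u) r : ℂ))
        linarith
      have hr3 : m * ‖v‖ ^ 2 ≤ re (inner ℂ (X v) v : ℂ) := hXv v
      have hrsm : re (((‖v‖ ^ 2 : ℝ) : ℂ) * (inner ℂ (X u) u : ℂ))
          = ‖v‖ ^ 2 * re (inner ℂ (X u) u : ℂ) := re_ofReal_mul' _ _
      have hmain : 2 * m * ‖v‖ ^ 2 - ‖X‖ * ‖r‖ ≤ re (inner ℂ ((T * X + X * T) u) v : ℂ) := by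
        have hp1 : ‖v‖ ^ 2 * m ≤ ‖v‖ ^ 2 * re (inner ℂ (X u) u : ℂ) :=
          mul_le_mul_of_nonneg_left hr1 (sq_nonneg ‖v‖)
        rw [e1, map_add, e2, e3, map_add, hrsm]
        linarith
      have hub : re (inner ℂ ((T * X + X * T) u) v : ℂ) ≤ N * ‖T‖ := by
        have h1 : re (inner ℂ ((T * X + X * T) u) v : ℂ) ≤ ‖(inner ℂ ((T * X + X * T) u) v : ℂ)‖ :=
          RCLike.re_le_norm _
        have h2 : ‖(inner ℂ ((T * X + X * T) u) v : ℂ)‖ ≤ ‖(T * X + X * T) u‖ * ‖v‖ :=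
          norm_inner_le_norm _ _
        have h3 : ‖(T * X + X * T) u‖ ≤ N := by
          have := (T * X + X * T).le_opNorm u
          rwa [hu1, mul_one] at this
        have hN0 : 0 ≤ N := norm_nonneg _
        have h4 : ‖(T * X + X * T) u‖ * ‖v‖ ≤ N * ‖v‖ :=
          mul_le_mul_of_nonneg_right h3 (norm_nonneg v)
        have h5 : N * ‖v‖ ≤ N * ‖T‖ := mul_le_mul_of_nonneg_left hvT hN0
        linarith
      have hXr : ‖X‖ * ‖r‖ ≤ ‖X‖ * (‖T‖ * Real.sqrt (‖T‖ ^ 2 - c ^ 2)) :=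
        mul_le_mul_of_nonneg_left hrle (norm_nonneg X)
      have hcv : c ^ 2 ≤ ‖v‖ ^ 2 := by nlinarith
      have hmc : 2 * m * c ^ 2 ≤ 2 * m * ‖v‖ ^ 2 := by nlinarith
      linarith
    have lim : Filter.Tendsto
        (fun c : ℝ => 2 * m * c ^ 2 - ‖X‖ * ‖T‖ * Real.sqrt (‖T‖ ^ 2 - c ^ 2))
        (nhdsWithin ‖T‖ (Set.Iio ‖T‖)) (nhds (2 * m * ‖T‖ ^ 2)) := by
      have hcont : Continuous
          (fun c : ℝ => 2 * m * c ^ 2 - ‖X‖ * ‖T‖ * Real.sqrt (‖T‖ ^ 2 - c ^ 2)) := by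
        fun_prop
      have h : Filter.Tendsto
          (fun c : ℝ => 2 * m * c ^ 2 - ‖X‖ * ‖T‖ * Real.sqrt (‖T‖ ^ 2 - c ^ 2))
          (nhdsWithin ‖T‖ (Set.Iio ‖T‖))
          (nhds (2 * m * ‖T‖ ^ 2 - ‖X‖ * ‖T‖ * Real.sqrt (‖T‖ ^ 2 - ‖T‖ ^ 2))) :=
        (hcont.tendsto ‖T‖).mono_left nhdsWithin_le_nhds
      simpa using h
    have evt : ∀ᶠ c in nhdsWithin ‖T‖ (Set.Iio ‖T‖),
        2 * m * c ^ 2 - ‖X‖ * ‖T‖ * Real.sqrt (‖T‖ ^ 2 - c ^ 2) ≤ N * ‖T‖ := by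
      filter_upwards [Ioo_mem_nhdsLT_of_mem (Set.mem_Ioc.2 ⟨hT, le_refl ‖T‖⟩)] with c hc
      exact key c hc.1.le hc.2
    have hfin : 2 * m * ‖T‖ ^ 2 ≤ N * ‖T‖ := le_of_tendsto lim evt
    nlinarith

end Lower

theorem stmt_11 {H : Type*} [NormedAddCommGroup H] [InnerProductSpace ℂ H] [CompleteSpace H]
    (A B X : H →L[ℂ] H) (m : ℝ) (hm : 0 < m)
    (hX : (X - (m : ℂ) • (1 : H →L[ℂ] H)).IsPositive)
    (S : WithLp 2 (H × H) →L[ℂ] WithLp 2 (H × H))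
    (hS : S = offDiagOp (A * X - X * B)
      (ContinuousLinearMap.adjoint A * X - X * ContinuousLinearMap.adjoint B)) :
    m * ‖A - B‖ ≤ numRadius S ∧
      numRadius S ≤ (‖A * X - X * B‖ +
        ‖ContinuousLinearMap.adjoint A * X - X * ContinuousLinearMap.adjoint B‖) / 2 := by
  subst hS
  set C := A * X - X * B with hCdef
  set D := ContinuousLinearMap.adjoint A * X - X * ContinuousLinearMap.adjoint B with hDdef
  constructor
  · have hXsa : IsSelfAdjoint X := by
      have h1 : IsSelfAdjoint ((m : ℂ) • (1 : H →L[ℂ] H)) := by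
        apply IsSelfAdjoint.smul
        · exact Complex.conj_ofReal m
        · exact IsSelfAdjoint.one _
      have h2 := hX.isSelfAdjoint.add h1
      simpa using h2
    have hid : C + ContinuousLinearMap.adjoint D = (A - B) * X + X * (A - B) := by
      rw [hCdef, hDdef]
      rw [← ContinuousLinearMap.star_eq_adjoint, ← ContinuousLinearMap.star_eq_adjoint,
        ← ContinuousLinearMap.star_eq_adjoint]
      rw [star_sub, star_mul, star_mul, star_star, star_star, hXsa.star_eq]
      noncomm_ring
    have h1 : 2 * m * ‖A - B‖ ≤ ‖(A - B) * X + X * (A - B)‖ :=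
      anti_lower (A - B) X m hm hX
    have h2 : ‖C + ContinuousLinearMap.adjoint D‖ ≤ 2 * numRadius (offDiagOp C D) :=
      opNorm_le_double C D
    rw [hid] at h2
    linarith
  · exact numRadius_offDiag_le C D
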